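/- Let F ⊆ ℝ^{n×m} be a nonempty closed set and Ŷ ∈ ℝ^{n×m}. For any minimizer Y* of q₀(Y) + η ‖Y − Ŷ‖_F² over F with η > ‖A₀‖₂, writing Ȳ for a closest point of F to Ŷ (so ‖Ȳ − Ŷ‖_F = d_F(Ŷ)), one has q₀(Y*) ≤ q₀(Ŷ) + ‖∇q₀(Ŷ)‖_F d_F(Ŷ) + ‖A₀‖₂ d_F(Ŷ)² , i.e., the objective value of the penalized minimizer is bounded by the expanded function q̃₀(Ŷ) = q₀(Ŷ) + ‖∇q₀(Ŷ)‖_F d_F(Ŷ) + ‖A₀‖₂ d_F(Ŷ)². -/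

import Mathlib

open Matrix Finset

/-- Frobenius norm of a real matrix. -/
noncomputable def frob {n m : ℕ} (M : Matrix (Fin n) (Fin m) ℝ) : ℝ :=
  Real.sqrt (∑ i, ∑ j, (M i j) ^ 2)

/-- Spectral (operator) norm of a square real matrix. -/
noncomputable def spec {n : ℕ} (A : Matrix (Fin n) (Fin n) ℝ) : ℝ :=
  ‖Matrix.toEuclideanCLM (𝕜 := ℝ) A‖

/-- Euclidean norm of a finitely-indexed real vector. -/
noncomputable def euc {ι : Type*} [Fintype ι] (x : ι → ℝ) : ℝ :=
  Real.sqrt (∑ i, (x i) ^ 2)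

/-- The quadratic function q(Y) = tr(Yᵀ A Y) + 2 tr(Bᵀ Y) + c. -/
noncomputable def quadF {n m : ℕ} (A : Matrix (Fin n) (Fin n) ℝ)
    (B : Matrix (Fin n) (Fin m) ℝ) (c : ℝ) (Y : Matrix (Fin n) (Fin m) ℝ) : ℝ :=
  (Yᵀ * A * Y).trace + 2 * (Bᵀ * Y).trace + c

/-- The gradient ∇q(Y) = 2(AY + B). -/
noncomputable def gradF {n m : ℕ} (A : Matrix (Fin n) (Fin n) ℝ)
    (B Y : Matrix (Fin n) (Fin m) ℝ) : Matrix (Fin n) (Fin m) ℝ :=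
  (2 : ℝ) • (A * Y + B)

/-- Frobenius distance from a point to a set of matrices. -/
noncomputable def distF {n m : ℕ} (F : Set (Matrix (Fin n) (Fin m) ℝ))
    (Z : Matrix (Fin n) (Fin m) ℝ) : ℝ :=
  sInf ((fun Y => frob (Y - Z)) '' F)

/-- Smallest singular value: σ_min(J) = inf{‖Jᵀξ‖₂ : ‖ξ‖₂ = 1}. -/
noncomputable def sigMin {ι κ : Type*} [Fintype ι] [Fintype κ] (J : Matrix ι κ ℝ) : ℝ :=
  sInf {r | ∃ ξ : ι → ℝ, euc ξ = 1 ∧ r = euc (J.transpose.mulVec ξ)}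

/-- Spectral norm of a rectangular matrix: sup{‖Jx‖₂ : ‖x‖₂ = 1}. -/
noncomputable def specR {ι κ : Type*} [Fintype ι] [Fintype κ] (J : Matrix ι κ ℝ) : ℝ :=
  sSup {r | ∃ x : κ → ℝ, euc x = 1 ∧ r = euc (J.mulVec x)}

/-- Maximum absolute row-sum norm ‖M‖₁. -/
noncomputable def rowNorm {n : ℕ} (A : Matrix (Fin n) (Fin n) ℝ) : ℝ :=
  ⨆ i, ∑ j, |A i j|

lemma frob_nonneg {n m : ℕ} (M : Matrix (Fin n) (Fin m) ℝ) : 0 ≤ frob M :=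
  Real.sqrt_nonneg _

lemma frob_sq {n m : ℕ} (M : Matrix (Fin n) (Fin m) ℝ) :
    frob M ^ 2 = ∑ i, ∑ j, (M i j) ^ 2 :=
  Real.sq_sqrt (by positivity)

noncomputable def vecOf {n m : ℕ} (M : Matrix (Fin n) (Fin m) ℝ) :
    EuclideanSpace ℝ (Fin n × Fin m) :=
  (WithLp.equiv 2 _).symm (fun p => M p.1 p.2)

lemma norm_vecOf {n m : ℕ} (M : Matrix (Fin n) (Fin m) ℝ) : ‖vecOf M‖ = frob M := by
  rw [EuclideanSpace.norm_eq, frob]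
  congr 1
  rw [Fintype.sum_prod_type]
  refine Finset.sum_congr rfl fun i _ => Finset.sum_congr rfl fun j _ => ?_
  show ‖M i j‖ ^ 2 = M i j ^ 2
  rw [Real.norm_eq_abs, sq_abs]

lemma trace_le_frob {n m : ℕ} (G D : Matrix (Fin n) (Fin m) ℝ) :
    (Gᵀ * D).trace ≤ frob G * frob D := by
  have h : (Gᵀ * D).trace = (inner ℝ (vecOf G) (vecOf D) : ℝ) := by
    rw [Matrix.trace, PiLp.inner_apply]
    simp only [Matrix.diag, Matrix.mul_apply, Matrix.transpose_apply, RCLike.inner_apply,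
      starRingEnd_apply, star_trivial]
    rw [Fintype.sum_prod_type, Finset.sum_comm]
    exact Finset.sum_congr rfl fun j _ => Finset.sum_congr rfl fun i _ => by rw [mul_comm]; rfl
  rw [h, ← norm_vecOf G, ← norm_vecOf D]
  exact real_inner_le_norm _ _

noncomputable def wv {n : ℕ} (x : Fin n → ℝ) : EuclideanSpace ℝ (Fin n) :=
  (WithLp.equiv 2 _).symm x

lemma quad_le_spec {n : ℕ} (A : Matrix (Fin n) (Fin n) ℝ) (x : Fin n → ℝ) :
    x ⬝ᵥ (A *ᵥ x) ≤ spec A * ∑ i, (x i) ^ 2 := by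
  have h1 : x ⬝ᵥ (A *ᵥ x) = (inner ℝ (wv x) (Matrix.toEuclideanCLM (𝕜 := ℝ) A (wv x)) : ℝ) := by
    simp only [wv]
    rw [WithLp.equiv_symm_apply, Matrix.toEuclideanCLM_toLp, PiLp.inner_apply]
    simp only [RCLike.inner_apply, starRingEnd_apply, star_trivial]
    refine Finset.sum_congr rfl fun i _ => ?_
    simp [wv, Matrix.toLin'_apply, Matrix.mulVec, dotProduct, mul_comm]
  have h2 : ‖wv x‖ ^ 2 = ∑ i, (x i) ^ 2 := by
    rw [EuclideanSpace.norm_eq, Real.sq_sqrt (by positivity)]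
    refine Finset.sum_congr rfl fun i _ => ?_
    show ‖x i‖ ^ 2 = x i ^ 2
    rw [Real.norm_eq_abs, sq_abs]
  calc x ⬝ᵥ (A *ᵥ x) = _ := h1
    _ ≤ ‖wv x‖ * ‖Matrix.toEuclideanCLM (𝕜 := ℝ) A (wv x)‖ := real_inner_le_norm _ _
    _ ≤ ‖wv x‖ * (spec A * ‖wv x‖) := by
        exact mul_le_mul_of_nonneg_left ((Matrix.toEuclideanCLM (𝕜 := ℝ) A).le_opNorm _)
          (norm_nonneg _)
    _ = spec A * ∑ i, (x i) ^ 2 := by rw [← h2]; ring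

lemma quadform_le {n m : ℕ} (A : Matrix (Fin n) (Fin n) ℝ) (D : Matrix (Fin n) (Fin m) ℝ) :
    (Dᵀ * A * D).trace ≤ spec A * (frob D) ^ 2 := by
  have h : (Dᵀ * A * D).trace = ∑ j, (fun i => D i j) ⬝ᵥ (A *ᵥ (fun i => D i j)) := by
    rw [Matrix.trace]
    refine Finset.sum_congr rfl fun j _ => ?_
    simp only [Matrix.diag, Matrix.mul_apply, Matrix.transpose_apply, dotProduct,
      Matrix.mulVec, Finset.mul_sum]
    rw [Finset.sum_comm]
    refine Finset.sum_congr rfl fun k _ => ?_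
    rw [Finset.sum_mul]
    exact Finset.sum_congr rfl fun i _ => by ring
  rw [h, frob_sq, Finset.sum_comm, Finset.mul_sum]
  exact Finset.sum_le_sum fun j _ => quad_le_spec A _

lemma quad_expand {n m : ℕ} (A : Matrix (Fin n) (Fin n) ℝ) (hA : A.IsSymm)
    (B : Matrix (Fin n) (Fin m) ℝ) (c : ℝ) (Y D : Matrix (Fin n) (Fin m) ℝ) :
    quadF A B c (Y + D) = quadF A B c Y + ((gradF A B Y)ᵀ * D).trace
      + (Dᵀ * A * D).trace := by
  have hsym : (Yᵀ * A * D).trace = (Dᵀ * A * Y).trace := by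
    rw [← Matrix.trace_transpose (Yᵀ * A * D)]
    rw [Matrix.transpose_mul, Matrix.transpose_mul, Matrix.transpose_transpose, hA.eq,
      Matrix.mul_assoc]
  simp only [quadF, gradF, Matrix.transpose_add, Matrix.transpose_smul, Matrix.add_mul,
    Matrix.mul_add, Matrix.smul_mul, Matrix.trace_add, Matrix.trace_smul, smul_eq_mul,
    Matrix.transpose_mul, hA.eq]
  rw [hsym]
  ring

theorem proximal_minimizer_objective_bound {n m : ℕ}
    (F : Set (Matrix (Fin n) (Fin m) ℝ)) (hFne : F.Nonempty) (hFcl : IsClosed F)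
    (A₀ : Matrix (Fin n) (Fin n) ℝ) (hA₀ : A₀.IsSymm)
    (B₀ : Matrix (Fin n) (Fin m) ℝ) (c₀ : ℝ)
    (Ych : Matrix (Fin n) (Fin m) ℝ) (η : ℝ) (hη : 0 < η) (hη' : spec A₀ < η)
    (Yst : Matrix (Fin n) (Fin m) ℝ) (hYst : Yst ∈ F)
    (Ybar : Matrix (Fin n) (Fin m) ℝ) (hYbar : Ybar ∈ F)
    (hclosest : frob (Ybar - Ych) = distF F Ych)
    (hmin : ∀ Y ∈ F, quadF A₀ B₀ c₀ Yst + η * (frob (Yst - Ych)) ^ 2 ≤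
      quadF A₀ B₀ c₀ Y + η * (frob (Y - Ych)) ^ 2) :
    quadF A₀ B₀ c₀ Yst ≤ quadF A₀ B₀ c₀ Ych +
      frob (gradF A₀ B₀ Ych) * distF F Ych + spec A₀ * (distF F Ych) ^ 2 := by
  have hd0 : 0 ≤ distF F Ych := hclosest ▸ frob_nonneg _
  have hd_le : distF F Ych ≤ frob (Yst - Ych) := by
    apply csInf_le
    · exact ⟨0, by rintro r ⟨Y, _, rfl⟩; exact frob_nonneg _⟩
    · exact ⟨Yst, hYst, rfl⟩
  have h1 := hmin Ybar hYbar
  have h2 : quadF A₀ B₀ c₀ Yst ≤ quadF A₀ B₀ c₀ Ybar := by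
    have hb : frob (Ybar - Ych) ≤ frob (Yst - Ych) := hclosest ▸ hd_le
    have : η * (frob (Ybar - Ych)) ^ 2 ≤ η * (frob (Yst - Ych)) ^ 2 :=
      mul_le_mul_of_nonneg_left (pow_le_pow_left₀ (frob_nonneg _) hb 2) hη.le
    linarith
  have h3 : quadF A₀ B₀ c₀ Ybar ≤ quadF A₀ B₀ c₀ Ych +
      frob (gradF A₀ B₀ Ych) * distF F Ych + spec A₀ * (distF F Ych) ^ 2 := by
    have hexp := quad_expand A₀ hA₀ B₀ c₀ Ych (Ybar - Ych)
    have hY : Ych + (Ybar - Ych) = Ybar := by abel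
    rw [hY] at hexp
    rw [hexp, ← hclosest]
    have t1 := trace_le_frob (gradF A₀ B₀ Ych) (Ybar - Ych)
    have t2 := quadform_le A₀ (Ybar - Ych)
    linarith
  linarith
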